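/- If f : ℝᵈ → ℝ is convex, differentiable, and L_i-smooth in coordinate i (|∇_i f(x + c·e_i) - ∇_i f(x)| ≤ L_i|c| for all x and c ∈ ℝ), then for all x, y: f(y) ≥ f(x) + ⟨∇f(x), y - x⟩ + (1/(2L_i))|∇_i f(y) - ∇_i f(x)|². -/

import Mathlib

open scoped RealInnerProductSpace

private lemma lineDeriv_aux {d : ℕ} (f : EuclideanSpace ℝ (Fin d) → ℝ)
    (f' : EuclideanSpace ℝ (Fin d) → EuclideanSpace ℝ (Fin d))
    (hdiff : ∀ x, HasGradientAt f (f' x) x)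
    (z v : EuclideanSpace ℝ (Fin d)) (t : ℝ) :
    HasDerivAt (fun s : ℝ => f (z + s • v)) ⟪f' (z + t • v), v⟫ t := by
  have hc : HasDerivAt (fun s : ℝ => z + s • v) v t := by
    simpa using ((hasDerivAt_id t).smul_const v).const_add z
  have h := ((hdiff (z + t • v)).hasFDerivAt.comp_hasDerivAt t hc)
  simpa [InnerProductSpace.toDual_apply_apply, Function.comp_def] using h

private lemma descent_aux {d : ℕ} (f : EuclideanSpace ℝ (Fin d) → ℝ)
    (f' : EuclideanSpace ℝ (Fin d) → EuclideanSpace ℝ (Fin d))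
    (hdiff : ∀ x, HasGradientAt f (f' x) x)
    (i : Fin d) (Li : ℝ) (hLi : 0 < Li)
    (hcoord : ∀ x (c : ℝ), |f' (x + c • EuclideanSpace.single i 1) i - f' x i| ≤ Li * |c|)
    (z : EuclideanSpace ℝ (Fin d)) (c : ℝ) :
    f (z + c • EuclideanSpace.single i 1) ≤ f z + c * f' z i + Li * c ^ 2 / 2 := by
  set e : EuclideanSpace ℝ (Fin d) := EuclideanSpace.single i 1 with he
  set ψ : ℝ → ℝ := fun t => f z + t * f' z i + Li * t ^ 2 / 2 - f (z + t • e) with hψ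
  have hinner : ∀ t : ℝ, (⟪f' (z + t • e), e⟫ : ℝ) = f' (z + t • e) i := by
    intro t
    rw [he]
    rw [show ((1:ℝ) : ℝ) = ((1:ℝ) : ℝ) from rfl]
    simpa using EuclideanSpace.inner_single_right (𝕜 := ℝ) i 1 (f' (z + t • e))
  have hψd : ∀ t : ℝ, HasDerivAt ψ (f' z i + Li * t - f' (z + t • e) i) t := by
    intro t
    have h1 : HasDerivAt (fun t : ℝ => f z + t * f' z i + Li * t ^ 2 / 2)
        (f' z i + Li * t) t := by
      have : HasDerivAt (fun t : ℝ => f z + t * f' z i + Li * t ^ 2 / 2)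
          (0 + 1 * f' z i + Li * ((2:ℕ) * t ^ (2-1)) / 2) t := by
        exact (((hasDerivAt_const t (f z)).add ((hasDerivAt_id t).mul_const (f' z i))).add
          (((hasDerivAt_pow 2 t).const_mul Li).div_const 2))
      convert this using 1
      ring
    have h2 := lineDeriv_aux f f' hdiff z e t
    rw [hinner t] at h2
    exact h1.sub h2
  have key : ∀ t : ℝ, ψ 0 ≤ ψ t := by
    intro t
    rcases le_total 0 t with ht | ht
    · have hmono : MonotoneOn ψ (Set.Ici (0:ℝ)) := by
        apply monotoneOn_of_deriv_nonneg (convex_Ici 0)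
          (fun s _ => (hψd s).differentiableAt.continuousAt.continuousWithinAt)
          (fun s _ => (hψd s).differentiableAt.differentiableWithinAt)
        intro s hs
        rw [interior_Ici] at hs
        rw [(hψd s).deriv]
        have := hcoord z s
        have habs : |f' (z + s • e) i - f' z i| ≤ Li * s := by
          rwa [abs_of_pos (Set.mem_Ioi.mp hs)] at this
        have := abs_le.mp habs
        linarith [this.2]
      exact hmono (Set.mem_Ici.mpr le_rfl) (Set.mem_Ici.mpr ht) ht
    · have hanti : AntitoneOn ψ (Set.Iic (0:ℝ)) := by
        apply antitoneOn_of_deriv_nonpos (convex_Iic 0)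
          (fun s _ => (hψd s).differentiableAt.continuousAt.continuousWithinAt)
          (fun s _ => (hψd s).differentiableAt.differentiableWithinAt)
        intro s hs
        rw [interior_Iic] at hs
        rw [(hψd s).deriv]
        have := hcoord z s
        have habs : |f' (z + s • e) i - f' z i| ≤ Li * (-s) := by
          rwa [abs_of_neg (Set.mem_Iio.mp hs)] at this
        have := abs_le.mp habs
        linarith [this.1]
      exact hanti (Set.mem_Iic.mpr ht) (Set.mem_Iic.mpr le_rfl) ht
  have h0 : ψ 0 = 0 := by simp [hψ]
  have hc := key c
  rw [h0] at hc
  simp only [hψ] at hc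
  linarith

private lemma first_order_aux {d : ℕ} (f : EuclideanSpace ℝ (Fin d) → ℝ)
    (f' : EuclideanSpace ℝ (Fin d) → EuclideanSpace ℝ (Fin d))
    (hdiff : ∀ x, HasGradientAt f (f' x) x)
    (hconv : ConvexOn ℝ Set.univ f)
    (x z : EuclideanSpace ℝ (Fin d)) :
    f x + ⟪f' x, z - x⟫ ≤ f z := by
  set φ : ℝ → ℝ := fun t => f (x + t • (z - x)) with hφ
  have hφconv : ConvexOn ℝ Set.univ φ := by
    have := hconv.comp_affineMap (AffineMap.lineMap x z : ℝ →ᵃ[ℝ] EuclideanSpace ℝ (Fin d))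
    have heq : ∀ t : ℝ, (f ∘ (AffineMap.lineMap x z : ℝ →ᵃ[ℝ] EuclideanSpace ℝ (Fin d))) t = φ t := by
      intro t
      simp [hφ, AffineMap.lineMap_apply, add_comm, vsub_eq_sub, vadd_eq_add]
    have hpre : (AffineMap.lineMap x z : ℝ →ᵃ[ℝ] EuclideanSpace ℝ (Fin d)) ⁻¹' Set.univ = Set.univ := by simp
    rw [hpre] at this
    exact this.congr (fun t _ => (heq t))
  have hφd : HasDerivAt φ ⟪f' x, z - x⟫ 0 := by
    have := lineDeriv_aux f f' hdiff x (z - x) 0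
    simpa using this
  have hslope := hφconv.le_slope_of_hasDerivAt (Set.mem_univ 0) (Set.mem_univ 1)
    one_pos hφd
  have h01 := hslope
  rw [slope_def_field] at h01
  have hφ0 : φ 0 = f x := by simp [hφ]
  have hφ1 : φ 1 = f z := by simp [hφ]
  have : ⟪f' x, z - x⟫ ≤ (φ 1 - φ 0) / (1 - 0) := by
    simpa [div_eq_mul_inv] using h01
  rw [hφ0, hφ1] at this
  have h2 : (f z - f x) / (1 - 0) = f z - f x := by norm_num
  rw [h2] at this
  linarith

/-- Coordinate strong convexity of the dual (Lemma 10): if convex differentiable `f : ℝᵈ → ℝ`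
is `Lᵢ`-smooth in coordinate `i`, then
`f(y) ≥ f(x) + ⟨∇f(x), y - x⟩ + (1/(2Lᵢ))|∇ᵢf(y) - ∇ᵢf(x)|²`. -/
theorem coordinate_smooth_dual_strong_convexity {d : ℕ}
    (f : EuclideanSpace ℝ (Fin d) → ℝ) (f' : EuclideanSpace ℝ (Fin d) → EuclideanSpace ℝ (Fin d))
    (hdiff : ∀ x, HasGradientAt f (f' x) x)
    (hconv : ConvexOn ℝ Set.univ f)
    (i : Fin d) (Li : ℝ) (hLi : 0 < Li)
    (hcoord : ∀ x (c : ℝ), |f' (x + c • EuclideanSpace.single i 1) i - f' x i| ≤ Li * |c|) :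
    ∀ x y, f x + ⟪f' x, y - x⟫ + 1 / (2 * Li) * |f' y i - f' x i| ^ 2 ≤ f y := by
  intro x y
  set e : EuclideanSpace ℝ (Fin d) := EuclideanSpace.single i 1 with he
  set Δ : ℝ := f' y i - f' x i with hΔ
  set c : ℝ := Δ / Li with hc
  have h1 := first_order_aux f f' hdiff hconv x (y + (-c) • e)
  have h2 := descent_aux f f' hdiff i Li hLi hcoord y (-c)
  have hinner : (⟪f' x, (y + (-c) • e) - x⟫ : ℝ)
      = ⟪f' x, y - x⟫ + (-c) * f' x i := by
    have hrw : (y + (-c) • e) - x = (y - x) + (-c) • e := by abel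
    rw [hrw, inner_add_right, real_inner_smul_right]
    congr 1
    have : (⟪f' x, e⟫ : ℝ) = f' x i := by
      rw [he]
      simpa using EuclideanSpace.inner_single_right (𝕜 := ℝ) i 1 (f' x)
    rw [this]
  rw [hinner] at h1
  have habs : |Δ| ^ 2 = Δ ^ 2 := sq_abs Δ
  have hLi' : Li ≠ 0 := ne_of_gt hLi
  have hkey : (-c) * f' x i + (-c) * f' y i + Li * (-c) ^ 2 / 2
      = -c * f' x i - c * f' y i + Δ ^ 2 / (2 * Li) := by
    rw [hc]
    field_simp
    ring
  have : f x + ⟪f' x, y - x⟫ + 1 / (2 * Li) * Δ ^ 2 ≤ f y := by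
    have hcΔ : c * Δ = Δ ^ 2 / Li := by rw [hc]; field_simp
    have hq : Li * (-c) ^ 2 / 2 = Δ ^ 2 / (2 * Li) := by
      rw [hc]; field_simp
    rw [← he] at h2
    have hsplit : c * Δ = c * f' y i - c * f' x i := by rw [hΔ]; ring
    have hhalf : Δ ^ 2 / Li = Δ ^ 2 / (2 * Li) + Δ ^ 2 / (2 * Li) := by
      field_simp
      ring
    have hdiv : 1 / (2 * Li) * Δ ^ 2 = Δ ^ 2 / (2 * Li) := by ring
    linarith [h1, h2, hq, hcΔ, hsplit, hhalf, hdiv]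
  rw [habs]
  exact this
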